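/- For every n ≥ 5, there exists a bridgeless graph of order n with n + 2 edges that has no orientation of diameter at most n - 2. -/

import Mathlib

open SimpleGraph

/-- `R` is an orientation of the simple graph `G`: every arc of `R` lies on an edge of `G`,
and every edge of `G` receives exactly one of its two possible directions. -/
def IsOrientation {V : Type*} (G : SimpleGraph V) (R : V → V → Prop) : Prop :=
  (∀ u v, R u v → G.Adj u v) ∧ ∀ u v, G.Adj u v → (R u v ↔ ¬ R v u)

/-- `RelPow R k u v` : there is a directed walk of length `k` from `u` to `v`. -/
def RelPow {V : Type*} (R : V → V → Prop) : ℕ → V → V → Prop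
  | 0, u, v => u = v
  | n + 1, u, v => ∃ w, R u w ∧ RelPow R n w v

/-- The digraph `R` has diameter at most `d`: any vertex can reach any other by a
directed walk of length at most `d`. -/
def DiamLE {V : Type*} (R : V → V → Prop) (d : ℕ) : Prop :=
  ∀ u v, ∃ k ≤ d, RelPow R k u v

/-- A digraph is strongly connected if every vertex can reach every other. -/
def StronglyConnected {V : Type*} (R : V → V → Prop) : Prop :=
  ∀ u v, Relation.ReflTransGen R u v

/-- A graph is bridgeless if it is connected and contains no bridge. -/
def Bridgeless {V : Type*} (G : SimpleGraph V) : Prop :=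
  G.Connected ∧ ∀ e, ¬ G.IsBridge e

/-- The graph `G_{n,d}`: the path `u_1 … u_d` is the set of indices `0,…,d-1`,
the clique `K_{n-d-1}` is the set of indices `d,…,n-2`, both endpoints `0` and `d-1`
of the path are joined to all clique vertices, and the extra vertex `u_3'` is the
index `n-1`, joined to `u_2, u_3, u_4`, i.e. to indices `1, 2, 3`. -/
def Gnd (n d : ℕ) : SimpleGraph (Fin n) :=
  SimpleGraph.fromRel (fun i j =>
    ((i : ℕ) + 1 = (j : ℕ) ∧ (j : ℕ) < d) ∨
    (d ≤ (i : ℕ) ∧ (i : ℕ) < n - 1 ∧ d ≤ (j : ℕ) ∧ (j : ℕ) < n - 1) ∨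
    (((i : ℕ) = 0 ∨ (i : ℕ) = d - 1) ∧ d ≤ (j : ℕ) ∧ (j : ℕ) < n - 1) ∨
    ((i : ℕ) = n - 1 ∧ ((j : ℕ) = 1 ∨ (j : ℕ) = 2 ∨ (j : ℕ) = 3)))

/-- The graph `H_{n,n-2}`: the cycle `u_1 … u_{n-1} u_1` is the set of indices
`0,…,n-2` in cyclic order, and the extra vertex `u_3'` is the index `n-1`,
joined to `u_2, u_3, u_4`, i.e. to indices `1, 2, 3`. -/
def Hgraph (n : ℕ) : SimpleGraph (Fin n) :=
  SimpleGraph.fromRel (fun i j =>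
    ((i : ℕ) + 1 = (j : ℕ) ∧ (j : ℕ) ≤ n - 2) ∨
    ((i : ℕ) = 0 ∧ (j : ℕ) = n - 2) ∨
    ((i : ℕ) = n - 1 ∧ ((j : ℕ) = 1 ∨ (j : ℕ) = 2 ∨ (j : ℕ) = 3)))

/-! ### RelPow lemmas -/

lemma relpow_snoc {V : Type*} {R : V → V → Prop} :
    ∀ {k : ℕ} {u v : V}, RelPow R (k+1) u v ↔ ∃ w, RelPow R k u w ∧ R w v := by
  intro k
  induction k with
  | zero => intro u v; constructor
            · rintro ⟨w, h, rfl⟩; exact ⟨u, rfl, h⟩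
            · rintro ⟨w, rfl, h⟩; exact ⟨v, h, rfl⟩
  | succ m ih =>
      intro u v
      constructor
      · rintro ⟨w, h1, h2⟩
        obtain ⟨z, hz1, hz2⟩ := ih.mp h2
        exact ⟨z, ⟨w, h1, hz1⟩, hz2⟩
      · rintro ⟨w, ⟨z, hz1, hz2⟩, h2⟩
        exact ⟨z, hz1, ih.mpr ⟨w, hz2, h2⟩⟩

lemma relpow_weight {V : Type*} {R : V → V → Prop} (w : V → ℕ)
    (hw : ∀ a b, R a b → w b ≤ w a + 1) :
    ∀ {k : ℕ} {u v : V}, RelPow R k u v → w v ≤ w u + k := by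
  intro k
  induction k with
  | zero => rintro u v rfl; omega
  | succ m ih =>
      rintro u v ⟨z, hz1, hz2⟩
      have := hw u z hz1
      have := ih hz2
      omega

lemma relpow_flip {V : Type*} {R : V → V → Prop} :
    ∀ {k : ℕ} {u v : V}, RelPow (fun a b => R b a) k u v ↔ RelPow R k v u := by
  intro k
  induction k with
  | zero => intro u v; exact ⟨fun h => h.symm, fun h => h.symm⟩
  | succ m ih =>
      intro u v
      constructor
      · rintro ⟨z, h1, h2⟩
        exact relpow_snoc.mpr ⟨z, ih.mp h2, h1⟩
      · intro h
        obtain ⟨z, h1, h2⟩ := relpow_snoc.mp h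
        exact ⟨z, h2, ih.mpr h1⟩

/-! ### adjacency -/

lemma hgraph_adj {n : ℕ} (hn : 5 ≤ n) (u v : Fin n) :
    (Hgraph n).Adj u v ↔
      (((u : ℕ) + 1 = (v : ℕ) ∧ (v : ℕ) ≤ n - 2) ∨
        ((u : ℕ) = 0 ∧ (v : ℕ) = n - 2) ∨
        ((u : ℕ) = n - 1 ∧ ((v : ℕ) = 1 ∨ (v : ℕ) = 2 ∨ (v : ℕ) = 3))) ∨
      (((v : ℕ) + 1 = (u : ℕ) ∧ (u : ℕ) ≤ n - 2) ∨
        ((v : ℕ) = 0 ∧ (u : ℕ) = n - 2) ∨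
        ((v : ℕ) = n - 1 ∧ ((u : ℕ) = 1 ∨ (u : ℕ) = 2 ∨ (u : ℕ) = 3))) := by
  rw [Hgraph, SimpleGraph.fromRel_adj]
  constructor
  · exact fun h => h.2
  · intro h
    refine ⟨fun he => ?_, h⟩
    subst he
    rcases h with (h|h|h)|(h|h|h) <;> omega

lemma hgraph_adj_mk {n : ℕ} (hn : 5 ≤ n) {a b : ℕ} (ha : a < n) (hb : b < n)
    (h : ((a + 1 = b ∧ b ≤ n - 2) ∨ (a = 0 ∧ b = n - 2) ∨
          (a = n - 1 ∧ (b = 1 ∨ b = 2 ∨ b = 3)))) :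
    (Hgraph n).Adj ⟨a, ha⟩ ⟨b, hb⟩ := by
  rw [hgraph_adj hn]
  exact Or.inl h

lemma r_congr {n : ℕ} {R : Fin n → Fin n → Prop} {u v : Fin n} (h : R u v)
    {a b : ℕ} (ha' : a < n) (hb' : b < n) (ha : (u : ℕ) = a) (hb : (v : ℕ) = b) :
    R ⟨a, ha'⟩ ⟨b, hb'⟩ := by
  obtain rfl : u = ⟨a, ha'⟩ := Fin.ext ha
  obtain rfl : v = ⟨b, hb'⟩ := Fin.ext hb
  exact h

/-! ### weight certificate -/

def wfun (n A B C D E G : ℕ) (i : ℕ) : ℕ :=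
  if i = 0 then A else if i = 1 then B else if i = 2 then C else if i = 3 then D
  else if i = n - 1 then E else min (G + (i - 4)) (n - 1)

set_option maxHeartbeats 1000000 in
lemma cert {n : ℕ} (hn : 5 ≤ n) (R : Fin n → Fin n → Prop)
    (hor : IsOrientation (Hgraph n) R) (hd : DiamLE R (n - 2))
    (hchain : ∀ m (h3 : 3 ≤ m) (hm : m ≤ n - 3), R ⟨m, by omega⟩ ⟨m + 1, by omega⟩)
    (h20 : R ⟨n - 2, by omega⟩ ⟨0, by omega⟩) (h01 : R ⟨0, by omega⟩ ⟨1, by omega⟩)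
    (A B C D E G s t : ℕ) (hs : s < n) (ht : t < n)
    (c12 : R ⟨1, by omega⟩ ⟨2, by omega⟩ → C ≤ B + 1)
    (c21 : R ⟨2, by omega⟩ ⟨1, by omega⟩ → B ≤ C + 1)
    (c23 : R ⟨2, by omega⟩ ⟨3, by omega⟩ → D ≤ C + 1)
    (c32 : R ⟨3, by omega⟩ ⟨2, by omega⟩ → C ≤ D + 1)
    (cx1 : R ⟨n - 1, by omega⟩ ⟨1, by omega⟩ → B ≤ E + 1)
    (c1x : R ⟨1, by omega⟩ ⟨n - 1, by omega⟩ → E ≤ B + 1)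
    (cx2 : R ⟨n - 1, by omega⟩ ⟨2, by omega⟩ → C ≤ E + 1)
    (c2x : R ⟨2, by omega⟩ ⟨n - 1, by omega⟩ → E ≤ C + 1)
    (cx3 : R ⟨n - 1, by omega⟩ ⟨3, by omega⟩ → D ≤ E + 1)
    (c3x : R ⟨3, by omega⟩ ⟨n - 1, by omega⟩ → E ≤ D + 1)
    (hA : B ≤ A + 1) (hG : G ≤ D + 1)
    (hwrap5 : n = 5 → A ≤ D + 1)
    (hwrap6 : 6 ≤ n → A ≤ min (G + (n - 6)) (n - 1) + 1)
    (hgap : wfun n A B C D E G s + (n - 1) ≤ wfun n A B C D E G t) : False := by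
  have warc : ∀ u v : Fin n, R u v →
      wfun n A B C D E G (v : ℕ) ≤ wfun n A B C D E G (u : ℕ) + 1 := by
    intro u v h
    have hadj := hor.1 u v h
    have hne : (u : ℕ) ≠ (v : ℕ) := fun he => hadj.ne (Fin.ext he)
    rw [hgraph_adj hn] at hadj
    have hu := u.isLt
    have hv := v.isLt
    rcases hadj with (h1|h1|h1)|(h1|h1|h1)
    · -- forward cycle edge : u+1 = v ≤ n-2
      obtain ⟨he, hle⟩ := h1
      rcases Nat.lt_or_ge (v : ℕ) 4 with h4 | h4
      · -- v ∈ {1,2,3}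
        rcases (by omega : (v:ℕ) = 1 ∨ (v:ℕ) = 2 ∨ (v:ℕ) = 3) with hv3 | hv3 | hv3
        · have hu0 : (u : ℕ) = 0 := by omega
          simp only [wfun]; split_ifs <;> omega
        · have := c12 (r_congr h (by omega) (by omega) (by omega) hv3)
          simp only [wfun]; split_ifs <;> omega
        · have := c23 (r_congr h (by omega) (by omega) (by omega) hv3)
          simp only [wfun]; split_ifs <;> omega
      · -- 4 ≤ v ≤ n-2, u = v-1 ≥ 3
        simp only [wfun]; split_ifs <;> omega
    · -- u = 0, v = n-2 : contradicts h20
      have h' := r_congr h (by omega) (by omega) h1.1 h1.2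
      have adj0 : (Hgraph n).Adj ⟨n - 2, by omega⟩ ⟨0, by omega⟩ :=
        (hgraph_adj_mk hn (by omega : (0:ℕ) < n) _ (by right; left; omega)).symm
      exact (((hor.2 _ _ adj0).mp h20) h').elim
    · -- u = n-1, v ∈ {1,2,3}
      obtain ⟨hux, hv3⟩ := h1
      rcases hv3 with hv3 | hv3 | hv3
      · have := cx1 (r_congr h (by omega) (by omega) hux hv3)
        simp only [wfun]; split_ifs <;> omega
      · have := cx2 (r_congr h (by omega) (by omega) hux hv3)
        simp only [wfun]; split_ifs <;> omega
      · have := cx3 (r_congr h (by omega) (by omega) hux hv3)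
        simp only [wfun]; split_ifs <;> omega
    · -- backward cycle edge : v+1 = u ≤ n-2
      obtain ⟨he, hle⟩ := h1
      rcases Nat.lt_or_ge (u : ℕ) 4 with h4 | h4
      · rcases (by omega : (u:ℕ) = 1 ∨ (u:ℕ) = 2 ∨ (u:ℕ) = 3) with hu3 | hu3 | hu3
        · -- R 1 0 contradicts h01
          have h' := r_congr (a := 1) (b := 0) h (by omega) (by omega) hu3 (by omega)
          have adj0 : (Hgraph n).Adj ⟨0, by omega⟩ ⟨1, by omega⟩ :=
            hgraph_adj_mk hn _ _ (by left; omega)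
          exact (((hor.2 _ _ adj0).mp h01) h').elim
        · have := c21 (r_congr h (by omega) (by omega) hu3 (by omega))
          simp only [wfun]; split_ifs <;> omega
        · have := c32 (r_congr h (by omega) (by omega) hu3 (by omega))
          simp only [wfun]; split_ifs <;> omega
      · -- u ≥ 4 : contradicts chain
        have hch := hchain (v : ℕ) (by omega) (by omega)
        have h' := r_congr (a := (v:ℕ) + 1) (b := (v:ℕ)) h (by omega) (by omega) (by omega) rfl
        have adjm : (Hgraph n).Adj ⟨(v : ℕ), by omega⟩ ⟨(v : ℕ) + 1, by omega⟩ :=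
          hgraph_adj_mk hn _ _ (by left; omega)
        exact (((hor.2 _ _ adjm).mp hch) h').elim
    · -- v = 0, u = n-2 : the wrap arc
      obtain ⟨hv0, hun⟩ := h1
      rcases eq_or_ne n 5 with h5 | h5
      · have := hwrap5 h5
        simp only [wfun]; split_ifs <;> omega
      · have := hwrap6 (by omega)
        simp only [wfun]; split_ifs <;> omega
    · -- v = n-1, u ∈ {1,2,3}
      obtain ⟨hvx, hu3⟩ := h1
      rcases hu3 with hu3 | hu3 | hu3
      · have := c1x (r_congr h (by omega) (by omega) hu3 hvx)
        simp only [wfun]; split_ifs <;> omega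
      · have := c2x (r_congr h (by omega) (by omega) hu3 hvx)
        simp only [wfun]; split_ifs <;> omega
      · have := c3x (r_congr h (by omega) (by omega) hu3 hvx)
        simp only [wfun]; split_ifs <;> omega
  obtain ⟨k, hk, hrp⟩ := hd ⟨s, hs⟩ ⟨t, ht⟩
  have := relpow_weight (fun x : Fin n => wfun n A B C D E G (x : ℕ)) warc hrp
  simp only at this
  omega
set_option maxHeartbeats 1000000 in
lemma forward {n : ℕ} (hn : 5 ≤ n) (R : Fin n → Fin n → Prop)
    (hor : IsOrientation (Hgraph n) R) (hd : DiamLE R (n - 2))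
    (h20 : R ⟨n - 2, by omega⟩ ⟨0, by omega⟩) : False := by
  have hout : ∀ u : Fin n, ∃ w, R u w := by
    intro u
    by_cases h0 : (u : ℕ) = 0
    · obtain ⟨k, hk, hrp⟩ := hd u ⟨1, by omega⟩
      cases k with
      | zero => exact absurd (congrArg Fin.val hrp) (by simp [h0])
      | succ m => obtain ⟨w, hw, _⟩ := hrp; exact ⟨w, hw⟩
    · obtain ⟨k, hk, hrp⟩ := hd u ⟨0, by omega⟩
      cases k with
      | zero => exact absurd (congrArg Fin.val hrp) (by simp [h0])
      | succ m => obtain ⟨w, hw, _⟩ := hrp; exact ⟨w, hw⟩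
  have hin : ∀ v : Fin n, ∃ w, R w v := by
    intro v
    by_cases h0 : (v : ℕ) = 0
    · obtain ⟨k, hk, hrp⟩ := hd ⟨1, by omega⟩ v
      cases k with
      | zero => exact absurd (congrArg Fin.val hrp.symm) (by simp [h0])
      | succ m => obtain ⟨w, _, hw⟩ := relpow_snoc.mp hrp; exact ⟨w, hw⟩
    · obtain ⟨k, hk, hrp⟩ := hd ⟨0, by omega⟩ v
      cases k with
      | zero => exact absurd (congrArg Fin.val hrp.symm) (by simp [h0])
      | succ m => obtain ⟨w, _, hw⟩ := relpow_snoc.mp hrp; exact ⟨w, hw⟩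
  have h01 : R ⟨0, by omega⟩ ⟨1, by omega⟩ := by
    obtain ⟨w, hw⟩ := hout ⟨0, by omega⟩
    have hadj := hor.1 _ _ hw
    rw [hgraph_adj hn] at hadj
    simp only [Fin.val_mk] at hadj
    have hw1 : (w : ℕ) = 1 ∨ (w : ℕ) = n - 2 := by
      rcases hadj with (h|h|h)|(h|h|h) <;> omega
    rcases hw1 with hw1 | hw1
    · exact r_congr (a := 0) (b := 1) hw (by omega) (by omega) rfl hw1
    · have h' := r_congr (a := 0) (b := n - 2) hw (by omega) (by omega) rfl hw1
      have adj0 : (Hgraph n).Adj ⟨n - 2, by omega⟩ ⟨0, by omega⟩ :=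
        (hgraph_adj_mk hn (by omega : (0:ℕ) < n) (by omega) (by right; left; omega)).symm
      exact (((hor.2 _ _ adj0).mp h20) h').elim
  have chain' : ∀ k, ∀ m (h3 : 3 ≤ m) (hm : m + k = n - 3),
      R ⟨m, by omega⟩ ⟨m + 1, by omega⟩ := by
    intro k
    induction k with
    | zero =>
      intro m h3 hm
      obtain ⟨w, hw⟩ := hin ⟨n - 2, by omega⟩
      have hadj := hor.1 _ _ hw
      rw [hgraph_adj hn] at hadj
      simp only [Fin.val_mk] at hadj
      have hw1 : (w : ℕ) = n - 3 ∨ (w : ℕ) = 0 := by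
        rcases hadj with (h|h|h)|(h|h|h) <;> omega
      rcases hw1 with hw1 | hw1
      · exact r_congr (a := m) (b := m + 1) hw (by omega) (by omega)
          (by omega) (by simp only [Fin.val_mk]; omega)
      · have h' := r_congr (a := 0) (b := n - 2) hw (by omega) (by omega) hw1
          (by simp only [Fin.val_mk])
        have adj0 : (Hgraph n).Adj ⟨n - 2, by omega⟩ ⟨0, by omega⟩ :=
          (hgraph_adj_mk hn (by omega : (0:ℕ) < n) (by omega) (by right; left; omega)).symm
        exact (((hor.2 _ _ adj0).mp h20) h').elim
    | succ k ih =>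
      intro m h3 hm
      have harc := ih (m + 1) (by omega) (by omega)
      obtain ⟨w, hw⟩ := hin ⟨m + 1, by omega⟩
      have hadj := hor.1 _ _ hw
      rw [hgraph_adj hn] at hadj
      simp only [Fin.val_mk] at hadj
      have hw1 : (w : ℕ) = m ∨ (w : ℕ) = m + 2 := by
        rcases hadj with (h|h|h)|(h|h|h) <;> omega
      rcases hw1 with hw1 | hw1
      · exact r_congr (a := m) (b := m + 1) hw (by omega) (by omega) hw1
          (by simp only [Fin.val_mk])
      · have h' := r_congr (a := m + 2) (b := m + 1) hw (by omega) (by omega) hw1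
          (by simp only [Fin.val_mk])
        have adjm : (Hgraph n).Adj ⟨m + 1, by omega⟩ ⟨m + 2, by omega⟩ :=
          hgraph_adj_mk hn (by omega) (by omega) (by left; omega)
        exact (((hor.2 _ _ adjm).mp harc) h').elim
  have hchain : ∀ m (h3 : 3 ≤ m) (hm : m ≤ n - 3), R ⟨m, by omega⟩ ⟨m + 1, by omega⟩ :=
    fun m h3 hm => chain' (n - 3 - m) m h3 (by omega)
  have adj12 : (Hgraph n).Adj ⟨1, by omega⟩ ⟨2, by omega⟩ :=
    hgraph_adj_mk hn (by omega) (by omega) (by left; omega)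
  have adj23 : (Hgraph n).Adj ⟨2, by omega⟩ ⟨3, by omega⟩ :=
    hgraph_adj_mk hn (by omega) (by omega) (by left; omega)
  have adjx1 : (Hgraph n).Adj ⟨n - 1, by omega⟩ ⟨1, by omega⟩ :=
    hgraph_adj_mk hn (by omega) (by omega) (by right; right; omega)
  have adjx2 : (Hgraph n).Adj ⟨n - 1, by omega⟩ ⟨2, by omega⟩ :=
    hgraph_adj_mk hn (by omega) (by omega) (by right; right; omega)
  have adjx3 : (Hgraph n).Adj ⟨n - 1, by omega⟩ ⟨3, by omega⟩ :=
    hgraph_adj_mk hn (by omega) (by omega) (by right; right; omega)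
  by_cases hae : R ⟨1, by omega⟩ ⟨2, by omega⟩
  · by_cases hbe : R ⟨2, by omega⟩ ⟨3, by omega⟩
    · by_cases hpe : R ⟨n - 1, by omega⟩ ⟨1, by omega⟩
      · by_cases hqe : R ⟨n - 1, by omega⟩ ⟨2, by omega⟩
        · by_cases hre : R ⟨n - 1, by omega⟩ ⟨3, by omega⟩
          · exact cert hn R hor hd hchain h20 h01 0 1 2 3 (n - 1) 4 0 (n - 1) (by omega) (by omega) (fun _ => by omega) (fun hc => (((hor.2 _ _ adj12).mp hae) hc).elim) (fun _ => by omega) (fun hc => (((hor.2 _ _ adj23).mp hbe) hc).elim) (fun _ => by omega) (fun hc => (((hor.2 _ _ adjx1).mp hpe) hc).elim) (fun _ => by omega) (fun hc => (((hor.2 _ _ adjx2).mp hqe) hc).elim) (fun _ => by omega) (fun hc => (((hor.2 _ _ adjx3).mp hre) hc).elim) (by omega) (by omega) (fun _ => by omega) (fun _ => by omega) (by simp only [wfun]; split_ifs <;> first | exact ‹False›.elim | omega)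
          · rcases Nat.lt_or_ge n 6 with h6 | h6
            · exact cert hn R hor hd hchain h20 h01 (n - 5) (n - 4) (n - 3) (n - 2) (n - 1) 0 0 (n - 1) (by omega) (by omega) (fun _ => by omega) (fun hc => (((hor.2 _ _ adj12).mp hae) hc).elim) (fun _ => by omega) (fun hc => (((hor.2 _ _ adj23).mp hbe) hc).elim) (fun _ => by omega) (fun hc => (((hor.2 _ _ adjx1).mp hpe) hc).elim) (fun _ => by omega) (fun hc => (((hor.2 _ _ adjx2).mp hqe) hc).elim) (fun hc => (hre hc).elim) (fun _ => by omega) (by omega) (by omega) (fun _ => by omega) (fun _ => by omega) (by simp only [wfun]; split_ifs <;> first | exact ‹False›.elim | omega)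
            · exact cert hn R hor hd hchain h20 h01 (n - 5) (n - 4) (n - 3) (n - 2) (n - 1) 0 4 (n - 1) (by omega) (by omega) (fun _ => by omega) (fun hc => (((hor.2 _ _ adj12).mp hae) hc).elim) (fun _ => by omega) (fun hc => (((hor.2 _ _ adj23).mp hbe) hc).elim) (fun _ => by omega) (fun hc => (((hor.2 _ _ adjx1).mp hpe) hc).elim) (fun _ => by omega) (fun hc => (((hor.2 _ _ adjx2).mp hqe) hc).elim) (fun hc => (hre hc).elim) (fun _ => by omega) (by omega) (by omega) (fun _ => by omega) (fun _ => by omega) (by simp only [wfun]; split_ifs <;> first | exact ‹False›.elim | omega)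
        · by_cases hre : R ⟨n - 1, by omega⟩ ⟨3, by omega⟩
          · exact cert hn R hor hd hchain h20 h01 (n - 4) (n - 3) (n - 2) 0 (n - 1) 1 3 (n - 1) (by omega) (by omega) (fun _ => by omega) (fun hc => (((hor.2 _ _ adj12).mp hae) hc).elim) (fun _ => by omega) (fun hc => (((hor.2 _ _ adj23).mp hbe) hc).elim) (fun _ => by omega) (fun hc => (((hor.2 _ _ adjx1).mp hpe) hc).elim) (fun hc => (hqe hc).elim) (fun _ => by omega) (fun _ => by omega) (fun hc => (((hor.2 _ _ adjx3).mp hre) hc).elim) (by omega) (by omega) (fun _ => by omega) (fun _ => by omega) (by simp only [wfun]; split_ifs <;> first | exact ‹False›.elim | omega)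
          · exact cert hn R hor hd hchain h20 h01 (n - 1) 1 2 3 0 4 (n - 1) 0 (by omega) (by omega) (fun _ => by omega) (fun hc => (((hor.2 _ _ adj12).mp hae) hc).elim) (fun _ => by omega) (fun hc => (((hor.2 _ _ adj23).mp hbe) hc).elim) (fun _ => by omega) (fun hc => (((hor.2 _ _ adjx1).mp hpe) hc).elim) (fun hc => (hqe hc).elim) (fun _ => by omega) (fun hc => (hre hc).elim) (fun _ => by omega) (by omega) (by omega) (fun _ => by omega) (fun _ => by omega) (by simp only [wfun]; split_ifs <;> first | exact ‹False›.elim | omega)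
      · by_cases hqe : R ⟨n - 1, by omega⟩ ⟨2, by omega⟩
        · by_cases hre : R ⟨n - 1, by omega⟩ ⟨3, by omega⟩
          · exact cert hn R hor hd hchain h20 h01 (n - 3) (n - 2) 0 1 (n - 1) 2 2 (n - 1) (by omega) (by omega) (fun _ => by omega) (fun hc => (((hor.2 _ _ adj12).mp hae) hc).elim) (fun _ => by omega) (fun hc => (((hor.2 _ _ adj23).mp hbe) hc).elim) (fun hc => (hpe hc).elim) (fun _ => by omega) (fun _ => by omega) (fun hc => (((hor.2 _ _ adjx2).mp hqe) hc).elim) (fun _ => by omega) (fun hc => (((hor.2 _ _ adjx3).mp hre) hc).elim) (by omega) (by omega) (fun _ => by omega) (fun _ => by omega) (by simp only [wfun]; split_ifs <;> first | exact ‹False›.elim | omega)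
          · exact cert hn R hor hd hchain h20 h01 (n - 2) (n - 1) 1 2 0 3 (n - 1) 1 (by omega) (by omega) (fun _ => by omega) (fun hc => (((hor.2 _ _ adj12).mp hae) hc).elim) (fun _ => by omega) (fun hc => (((hor.2 _ _ adj23).mp hbe) hc).elim) (fun hc => (hpe hc).elim) (fun _ => by omega) (fun _ => by omega) (fun hc => (((hor.2 _ _ adjx2).mp hqe) hc).elim) (fun hc => (hre hc).elim) (fun _ => by omega) (by omega) (by omega) (fun _ => by omega) (fun _ => by omega) (by simp only [wfun]; split_ifs <;> first | exact ‹False›.elim | omega)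
        · by_cases hre : R ⟨n - 1, by omega⟩ ⟨3, by omega⟩
          · exact cert hn R hor hd hchain h20 h01 (n - 3) (n - 2) (n - 1) 1 0 2 (n - 1) 2 (by omega) (by omega) (fun _ => by omega) (fun hc => (((hor.2 _ _ adj12).mp hae) hc).elim) (fun _ => by omega) (fun hc => (((hor.2 _ _ adj23).mp hbe) hc).elim) (fun hc => (hpe hc).elim) (fun _ => by omega) (fun hc => (hqe hc).elim) (fun _ => by omega) (fun _ => by omega) (fun hc => (((hor.2 _ _ adjx3).mp hre) hc).elim) (by omega) (by omega) (fun _ => by omega) (fun _ => by omega) (by simp only [wfun]; split_ifs <;> first | exact ‹False›.elim | omega)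
          · exact cert hn R hor hd hchain h20 h01 (n - 1) (n - 1) (n - 1) (n - 1) 0 n (n - 1) 0 (by omega) (by omega) (fun _ => by omega) (fun hc => (((hor.2 _ _ adj12).mp hae) hc).elim) (fun _ => by omega) (fun hc => (((hor.2 _ _ adj23).mp hbe) hc).elim) (fun hc => (hpe hc).elim) (fun _ => by omega) (fun hc => (hqe hc).elim) (fun _ => by omega) (fun hc => (hre hc).elim) (fun _ => by omega) (by omega) (by omega) (fun _ => by omega) (fun _ => by omega) (by simp only [wfun]; split_ifs <;> first | exact ‹False›.elim | omega)
    · by_cases hpe : R ⟨n - 1, by omega⟩ ⟨1, by omega⟩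
      · by_cases hqe : R ⟨n - 1, by omega⟩ ⟨2, by omega⟩
        · by_cases hre : R ⟨n - 1, by omega⟩ ⟨3, by omega⟩
          · exact cert hn R hor hd hchain h20 h01 0 1 2 (n - 1) (n - 1) n 0 3 (by omega) (by omega) (fun _ => by omega) (fun hc => (((hor.2 _ _ adj12).mp hae) hc).elim) (fun hc => (hbe hc).elim) (fun _ => by omega) (fun _ => by omega) (fun hc => (((hor.2 _ _ adjx1).mp hpe) hc).elim) (fun _ => by omega) (fun hc => (((hor.2 _ _ adjx2).mp hqe) hc).elim) (fun _ => by omega) (fun hc => (((hor.2 _ _ adjx3).mp hre) hc).elim) (by omega) (by omega) (fun _ => by omega) (fun _ => by omega) (by simp only [wfun]; split_ifs <;> first | exact ‹False›.elim | omega)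
          · exact cert hn R hor hd hchain h20 h01 0 1 2 (n - 1) (n - 1) n 0 3 (by omega) (by omega) (fun _ => by omega) (fun hc => (((hor.2 _ _ adj12).mp hae) hc).elim) (fun hc => (hbe hc).elim) (fun _ => by omega) (fun _ => by omega) (fun hc => (((hor.2 _ _ adjx1).mp hpe) hc).elim) (fun _ => by omega) (fun hc => (((hor.2 _ _ adjx2).mp hqe) hc).elim) (fun hc => (hre hc).elim) (fun _ => by omega) (by omega) (by omega) (fun _ => by omega) (fun _ => by omega) (by simp only [wfun]; split_ifs <;> first | exact ‹False›.elim | omega)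
        · by_cases hre : R ⟨n - 1, by omega⟩ ⟨3, by omega⟩
          · exact cert hn R hor hd hchain h20 h01 (n - 1) 0 1 3 2 4 1 0 (by omega) (by omega) (fun _ => by omega) (fun hc => (((hor.2 _ _ adj12).mp hae) hc).elim) (fun hc => (hbe hc).elim) (fun _ => by omega) (fun _ => by omega) (fun hc => (((hor.2 _ _ adjx1).mp hpe) hc).elim) (fun hc => (hqe hc).elim) (fun _ => by omega) (fun _ => by omega) (fun hc => (((hor.2 _ _ adjx3).mp hre) hc).elim) (by omega) (by omega) (fun _ => by omega) (fun _ => by omega) (by simp only [wfun]; split_ifs <;> first | exact ‹False›.elim | omega)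
          · exact cert hn R hor hd hchain h20 h01 0 1 2 (n - 1) 3 n 0 3 (by omega) (by omega) (fun _ => by omega) (fun hc => (((hor.2 _ _ adj12).mp hae) hc).elim) (fun hc => (hbe hc).elim) (fun _ => by omega) (fun _ => by omega) (fun hc => (((hor.2 _ _ adjx1).mp hpe) hc).elim) (fun hc => (hqe hc).elim) (fun _ => by omega) (fun hc => (hre hc).elim) (fun _ => by omega) (by omega) (by omega) (fun _ => by omega) (fun _ => by omega) (by simp only [wfun]; split_ifs <;> first | exact ‹False›.elim | omega)
      · by_cases hqe : R ⟨n - 1, by omega⟩ ⟨2, by omega⟩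
        · by_cases hre : R ⟨n - 1, by omega⟩ ⟨3, by omega⟩
          · exact cert hn R hor hd hchain h20 h01 (n - 1) (n - 1) 0 (n - 1) (n - 1) n 2 0 (by omega) (by omega) (fun _ => by omega) (fun hc => (((hor.2 _ _ adj12).mp hae) hc).elim) (fun hc => (hbe hc).elim) (fun _ => by omega) (fun hc => (hpe hc).elim) (fun _ => by omega) (fun _ => by omega) (fun hc => (((hor.2 _ _ adjx2).mp hqe) hc).elim) (fun _ => by omega) (fun hc => (((hor.2 _ _ adjx3).mp hre) hc).elim) (by omega) (by omega) (fun _ => by omega) (fun _ => by omega) (by simp only [wfun]; split_ifs <;> first | exact ‹False›.elim | omega)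
          · exact cert hn R hor hd hchain h20 h01 0 1 2 (n - 1) 2 n 0 3 (by omega) (by omega) (fun _ => by omega) (fun hc => (((hor.2 _ _ adj12).mp hae) hc).elim) (fun hc => (hbe hc).elim) (fun _ => by omega) (fun hc => (hpe hc).elim) (fun _ => by omega) (fun _ => by omega) (fun hc => (((hor.2 _ _ adjx2).mp hqe) hc).elim) (fun hc => (hre hc).elim) (fun _ => by omega) (by omega) (by omega) (fun _ => by omega) (fun _ => by omega) (by simp only [wfun]; split_ifs <;> first | exact ‹False›.elim | omega)
        · by_cases hre : R ⟨n - 1, by omega⟩ ⟨3, by omega⟩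
          · exact cert hn R hor hd hchain h20 h01 (n - 2) (n - 1) 0 2 1 3 2 1 (by omega) (by omega) (fun _ => by omega) (fun hc => (((hor.2 _ _ adj12).mp hae) hc).elim) (fun hc => (hbe hc).elim) (fun _ => by omega) (fun hc => (hpe hc).elim) (fun _ => by omega) (fun hc => (hqe hc).elim) (fun _ => by omega) (fun _ => by omega) (fun hc => (((hor.2 _ _ adjx3).mp hre) hc).elim) (by omega) (by omega) (fun _ => by omega) (fun _ => by omega) (by simp only [wfun]; split_ifs <;> first | exact ‹False›.elim | omega)
          · exact cert hn R hor hd hchain h20 h01 0 1 2 (n - 1) 2 n 0 3 (by omega) (by omega) (fun _ => by omega) (fun hc => (((hor.2 _ _ adj12).mp hae) hc).elim) (fun hc => (hbe hc).elim) (fun _ => by omega) (fun hc => (hpe hc).elim) (fun _ => by omega) (fun hc => (hqe hc).elim) (fun _ => by omega) (fun hc => (hre hc).elim) (fun _ => by omega) (by omega) (by omega) (fun _ => by omega) (fun _ => by omega) (by simp only [wfun]; split_ifs <;> first | exact ‹False›.elim | omega)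
  · by_cases hbe : R ⟨2, by omega⟩ ⟨3, by omega⟩
    · by_cases hpe : R ⟨n - 1, by omega⟩ ⟨1, by omega⟩
      · by_cases hqe : R ⟨n - 1, by omega⟩ ⟨2, by omega⟩
        · by_cases hre : R ⟨n - 1, by omega⟩ ⟨3, by omega⟩
          · exact cert hn R hor hd hchain h20 h01 0 1 (n - 1) (n - 1) (n - 1) n 0 2 (by omega) (by omega) (fun hc => (hae hc).elim) (fun _ => by omega) (fun _ => by omega) (fun hc => (((hor.2 _ _ adj23).mp hbe) hc).elim) (fun _ => by omega) (fun hc => (((hor.2 _ _ adjx1).mp hpe) hc).elim) (fun _ => by omega) (fun hc => (((hor.2 _ _ adjx2).mp hqe) hc).elim) (fun _ => by omega) (fun hc => (((hor.2 _ _ adjx3).mp hre) hc).elim) (by omega) (by omega) (fun _ => by omega) (fun _ => by omega) (by simp only [wfun]; split_ifs <;> first | exact ‹False›.elim | omega)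
          · exact cert hn R hor hd hchain h20 h01 0 1 (n - 1) (n - 1) (n - 1) n 0 2 (by omega) (by omega) (fun hc => (hae hc).elim) (fun _ => by omega) (fun _ => by omega) (fun hc => (((hor.2 _ _ adj23).mp hbe) hc).elim) (fun _ => by omega) (fun hc => (((hor.2 _ _ adjx1).mp hpe) hc).elim) (fun _ => by omega) (fun hc => (((hor.2 _ _ adjx2).mp hqe) hc).elim) (fun hc => (hre hc).elim) (fun _ => by omega) (by omega) (by omega) (fun _ => by omega) (fun _ => by omega) (by simp only [wfun]; split_ifs <;> first | exact ‹False›.elim | omega)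
        · by_cases hre : R ⟨n - 1, by omega⟩ ⟨3, by omega⟩
          · exact cert hn R hor hd hchain h20 h01 0 1 (n - 1) (n - 1) (n - 1) n 0 2 (by omega) (by omega) (fun hc => (hae hc).elim) (fun _ => by omega) (fun _ => by omega) (fun hc => (((hor.2 _ _ adj23).mp hbe) hc).elim) (fun _ => by omega) (fun hc => (((hor.2 _ _ adjx1).mp hpe) hc).elim) (fun hc => (hqe hc).elim) (fun _ => by omega) (fun _ => by omega) (fun hc => (((hor.2 _ _ adjx3).mp hre) hc).elim) (by omega) (by omega) (fun _ => by omega) (fun _ => by omega) (by simp only [wfun]; split_ifs <;> first | exact ‹False›.elim | omega)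
          · exact cert hn R hor hd hchain h20 h01 0 1 (n - 1) (n - 1) (n - 1) n 0 2 (by omega) (by omega) (fun hc => (hae hc).elim) (fun _ => by omega) (fun _ => by omega) (fun hc => (((hor.2 _ _ adj23).mp hbe) hc).elim) (fun _ => by omega) (fun hc => (((hor.2 _ _ adjx1).mp hpe) hc).elim) (fun hc => (hqe hc).elim) (fun _ => by omega) (fun hc => (hre hc).elim) (fun _ => by omega) (by omega) (by omega) (fun _ => by omega) (fun _ => by omega) (by simp only [wfun]; split_ifs <;> first | exact ‹False›.elim | omega)
      · by_cases hqe : R ⟨n - 1, by omega⟩ ⟨2, by omega⟩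
        · by_cases hre : R ⟨n - 1, by omega⟩ ⟨3, by omega⟩
          · exact cert hn R hor hd hchain h20 h01 (n - 4) (n - 3) (n - 1) 0 (n - 2) 1 3 2 (by omega) (by omega) (fun hc => (hae hc).elim) (fun _ => by omega) (fun _ => by omega) (fun hc => (((hor.2 _ _ adj23).mp hbe) hc).elim) (fun hc => (hpe hc).elim) (fun _ => by omega) (fun _ => by omega) (fun hc => (((hor.2 _ _ adjx2).mp hqe) hc).elim) (fun _ => by omega) (fun hc => (((hor.2 _ _ adjx3).mp hre) hc).elim) (by omega) (by omega) (fun _ => by omega) (fun _ => by omega) (by simp only [wfun]; split_ifs <;> first | exact ‹False›.elim | omega)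
          · exact cert hn R hor hd hchain h20 h01 (n - 1) 0 2 3 1 4 1 0 (by omega) (by omega) (fun hc => (hae hc).elim) (fun _ => by omega) (fun _ => by omega) (fun hc => (((hor.2 _ _ adj23).mp hbe) hc).elim) (fun hc => (hpe hc).elim) (fun _ => by omega) (fun _ => by omega) (fun hc => (((hor.2 _ _ adjx2).mp hqe) hc).elim) (fun hc => (hre hc).elim) (fun _ => by omega) (by omega) (by omega) (fun _ => by omega) (fun _ => by omega) (by simp only [wfun]; split_ifs <;> first | exact ‹False›.elim | omega)
        · by_cases hre : R ⟨n - 1, by omega⟩ ⟨3, by omega⟩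
          · exact cert hn R hor hd hchain h20 h01 0 1 (n - 1) 3 2 4 0 2 (by omega) (by omega) (fun hc => (hae hc).elim) (fun _ => by omega) (fun _ => by omega) (fun hc => (((hor.2 _ _ adj23).mp hbe) hc).elim) (fun hc => (hpe hc).elim) (fun _ => by omega) (fun hc => (hqe hc).elim) (fun _ => by omega) (fun _ => by omega) (fun hc => (((hor.2 _ _ adjx3).mp hre) hc).elim) (by omega) (by omega) (fun _ => by omega) (fun _ => by omega) (by simp only [wfun]; split_ifs <;> first | exact ‹False›.elim | omega)
          · exact cert hn R hor hd hchain h20 h01 0 1 (n - 1) (n - 1) 2 n 0 2 (by omega) (by omega) (fun hc => (hae hc).elim) (fun _ => by omega) (fun _ => by omega) (fun hc => (((hor.2 _ _ adj23).mp hbe) hc).elim) (fun hc => (hpe hc).elim) (fun _ => by omega) (fun hc => (hqe hc).elim) (fun _ => by omega) (fun hc => (hre hc).elim) (fun _ => by omega) (by omega) (by omega) (fun _ => by omega) (fun _ => by omega) (by simp only [wfun]; split_ifs <;> first | exact ‹False›.elim | omega)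
    · by_cases hpe : R ⟨n - 1, by omega⟩ ⟨1, by omega⟩
      · by_cases hqe : R ⟨n - 1, by omega⟩ ⟨2, by omega⟩
        · by_cases hre : R ⟨n - 1, by omega⟩ ⟨3, by omega⟩
          · exact cert hn R hor hd hchain h20 h01 0 1 (n - 1) (n - 1) (n - 1) n 0 2 (by omega) (by omega) (fun hc => (hae hc).elim) (fun _ => by omega) (fun hc => (hbe hc).elim) (fun _ => by omega) (fun _ => by omega) (fun hc => (((hor.2 _ _ adjx1).mp hpe) hc).elim) (fun _ => by omega) (fun hc => (((hor.2 _ _ adjx2).mp hqe) hc).elim) (fun _ => by omega) (fun hc => (((hor.2 _ _ adjx3).mp hre) hc).elim) (by omega) (by omega) (fun _ => by omega) (fun _ => by omega) (by simp only [wfun]; split_ifs <;> first | exact ‹False›.elim | omega)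
          · exact cert hn R hor hd hchain h20 h01 0 1 (n - 1) (n - 1) (n - 1) n 0 2 (by omega) (by omega) (fun hc => (hae hc).elim) (fun _ => by omega) (fun hc => (hbe hc).elim) (fun _ => by omega) (fun _ => by omega) (fun hc => (((hor.2 _ _ adjx1).mp hpe) hc).elim) (fun _ => by omega) (fun hc => (((hor.2 _ _ adjx2).mp hqe) hc).elim) (fun hc => (hre hc).elim) (fun _ => by omega) (by omega) (by omega) (fun _ => by omega) (fun _ => by omega) (by simp only [wfun]; split_ifs <;> first | exact ‹False›.elim | omega)
        · by_cases hre : R ⟨n - 1, by omega⟩ ⟨3, by omega⟩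
          · exact cert hn R hor hd hchain h20 h01 0 1 (n - 1) (n - 1) (n - 1) n 0 2 (by omega) (by omega) (fun hc => (hae hc).elim) (fun _ => by omega) (fun hc => (hbe hc).elim) (fun _ => by omega) (fun _ => by omega) (fun hc => (((hor.2 _ _ adjx1).mp hpe) hc).elim) (fun hc => (hqe hc).elim) (fun _ => by omega) (fun _ => by omega) (fun hc => (((hor.2 _ _ adjx3).mp hre) hc).elim) (by omega) (by omega) (fun _ => by omega) (fun _ => by omega) (by simp only [wfun]; split_ifs <;> first | exact ‹False›.elim | omega)
          · exact cert hn R hor hd hchain h20 h01 0 1 (n - 1) (n - 1) (n - 1) n 0 2 (by omega) (by omega) (fun hc => (hae hc).elim) (fun _ => by omega) (fun hc => (hbe hc).elim) (fun _ => by omega) (fun _ => by omega) (fun hc => (((hor.2 _ _ adjx1).mp hpe) hc).elim) (fun hc => (hqe hc).elim) (fun _ => by omega) (fun hc => (hre hc).elim) (fun _ => by omega) (by omega) (by omega) (fun _ => by omega) (fun _ => by omega) (by simp only [wfun]; split_ifs <;> first | exact ‹False›.elim | omega)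
      · by_cases hqe : R ⟨n - 1, by omega⟩ ⟨2, by omega⟩
        · by_cases hre : R ⟨n - 1, by omega⟩ ⟨3, by omega⟩
          · exact cert hn R hor hd hchain h20 h01 (n - 1) 1 0 3 2 4 2 0 (by omega) (by omega) (fun hc => (hae hc).elim) (fun _ => by omega) (fun hc => (hbe hc).elim) (fun _ => by omega) (fun hc => (hpe hc).elim) (fun _ => by omega) (fun _ => by omega) (fun hc => (((hor.2 _ _ adjx2).mp hqe) hc).elim) (fun _ => by omega) (fun hc => (((hor.2 _ _ adjx3).mp hre) hc).elim) (by omega) (by omega) (fun _ => by omega) (fun _ => by omega) (by simp only [wfun]; split_ifs <;> first | exact ‹False›.elim | omega)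
          · exact cert hn R hor hd hchain h20 h01 0 1 3 (n - 1) 2 n 0 3 (by omega) (by omega) (fun hc => (hae hc).elim) (fun _ => by omega) (fun hc => (hbe hc).elim) (fun _ => by omega) (fun hc => (hpe hc).elim) (fun _ => by omega) (fun _ => by omega) (fun hc => (((hor.2 _ _ adjx2).mp hqe) hc).elim) (fun hc => (hre hc).elim) (fun _ => by omega) (by omega) (by omega) (fun _ => by omega) (fun _ => by omega) (by simp only [wfun]; split_ifs <;> first | exact ‹False›.elim | omega)
        · by_cases hre : R ⟨n - 1, by omega⟩ ⟨3, by omega⟩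
          · rcases Nat.lt_or_ge n 6 with h6 | h6
            · exact cert hn R hor hd hchain h20 h01 (n - 5) (n - 4) (n - 1) (n - 2) (n - 3) 0 0 2 (by omega) (by omega) (fun hc => (hae hc).elim) (fun _ => by omega) (fun hc => (hbe hc).elim) (fun _ => by omega) (fun hc => (hpe hc).elim) (fun _ => by omega) (fun hc => (hqe hc).elim) (fun _ => by omega) (fun _ => by omega) (fun hc => (((hor.2 _ _ adjx3).mp hre) hc).elim) (by omega) (by omega) (fun _ => by omega) (fun _ => by omega) (by simp only [wfun]; split_ifs <;> first | exact ‹False›.elim | omega)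
            · exact cert hn R hor hd hchain h20 h01 (n - 5) (n - 4) (n - 1) (n - 2) (n - 3) 0 4 2 (by omega) (by omega) (fun hc => (hae hc).elim) (fun _ => by omega) (fun hc => (hbe hc).elim) (fun _ => by omega) (fun hc => (hpe hc).elim) (fun _ => by omega) (fun hc => (hqe hc).elim) (fun _ => by omega) (fun _ => by omega) (fun hc => (((hor.2 _ _ adjx3).mp hre) hc).elim) (by omega) (by omega) (fun _ => by omega) (fun _ => by omega) (by simp only [wfun]; split_ifs <;> first | exact ‹False›.elim | omega)
          · exact cert hn R hor hd hchain h20 h01 0 1 (n - 1) (n - 1) 2 n 0 2 (by omega) (by omega) (fun hc => (hae hc).elim) (fun _ => by omega) (fun hc => (hbe hc).elim) (fun _ => by omega) (fun hc => (hpe hc).elim) (fun _ => by omega) (fun hc => (hqe hc).elim) (fun _ => by omega) (fun hc => (hre hc).elim) (fun _ => by omega) (by omega) (by omega) (fun _ => by omega) (fun _ => by omega) (by simp only [wfun]; split_ifs <;> first | exact ‹False›.elim | omega)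


lemma no_orientation {n : ℕ} (hn : 5 ≤ n) :
    ¬ ∃ R : Fin n → Fin n → Prop, IsOrientation (Hgraph n) R ∧ DiamLE R (n - 2) := by
  rintro ⟨R, hor, hd⟩
  have adjw : (Hgraph n).Adj ⟨n - 2, by omega⟩ ⟨0, by omega⟩ :=
    (hgraph_adj_mk hn (by omega : (0:ℕ) < n) (by omega) (by right; left; omega)).symm
  by_cases h20 : R ⟨n - 2, by omega⟩ ⟨0, by omega⟩
  · exact forward hn R hor hd h20
  · have h02 : R ⟨0, by omega⟩ ⟨n - 2, by omega⟩ := by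
      have := hor.2 _ _ adjw
      tauto
    have hor' : IsOrientation (Hgraph n) (fun a b => R b a) := by
      constructor
      · intro u v h; exact (hor.1 _ _ h).symm
      · intro u v hadj
        have := hor.2 v u hadj.symm
        tauto
    have hd' : DiamLE (fun a b => R b a) (n - 2) := by
      intro u v
      obtain ⟨k, hk, hrp⟩ := hd v u
      exact ⟨k, hk, relpow_flip.mpr hrp⟩
    exact forward hn (fun a b => R b a) hor' hd' h02

/-! ### edge count -/

def edgeMap (n : ℕ) (hn : 5 ≤ n) : Fin (n + 2) → Sym2 (Fin n) := fun k =>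
  if h : (k : ℕ) < n - 2 then s(⟨(k : ℕ), by omega⟩, ⟨(k : ℕ) + 1, by omega⟩)
  else if (k : ℕ) = n - 2 then s(⟨0, by omega⟩, ⟨n - 2, by omega⟩)
  else if (k : ℕ) = n - 1 then s(⟨n - 1, by omega⟩, ⟨1, by omega⟩)
  else if (k : ℕ) = n then s(⟨n - 1, by omega⟩, ⟨2, by omega⟩)
  else s(⟨n - 1, by omega⟩, ⟨3, by omega⟩)

lemma edgeMap_inj {n : ℕ} (hn : 5 ≤ n) : Function.Injective (edgeMap n hn) := by
  intro j k hjk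
  apply Fin.ext
  unfold edgeMap at hjk
  have hj := j.isLt
  have hk := k.isLt
  split_ifs at hjk <;>
    (simp only [Sym2.eq_iff, Fin.mk.injEq] at hjk; omega)

lemma edgeset_eq {n : ℕ} (hn : 5 ≤ n) :
    (Hgraph n).edgeSet = Set.range (edgeMap n hn) := by
  ext e
  induction e using Sym2.ind with
  | _ u v =>
    constructor
    · intro he
      rw [SimpleGraph.mem_edgeSet, hgraph_adj hn] at he
      rcases he with (h|h|⟨hx, h3|h3|h3⟩)|(h|h|⟨hx, h3|h3|h3⟩)
      · exact ⟨⟨(u : ℕ), by omega⟩, by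
          simp only [edgeMap, Fin.val_mk]
          rw [dif_pos (by omega)]
          rw [Sym2.eq_iff]; left
          exact ⟨Fin.ext (by simp only [Fin.val_mk]; try omega),
                 Fin.ext (by simp only [Fin.val_mk]; try omega)⟩⟩
      · exact ⟨⟨n - 2, by omega⟩, by
          simp only [edgeMap, Fin.val_mk]
          rw [dif_neg (by omega), if_pos trivial]
          rw [Sym2.eq_iff]; left
          exact ⟨Fin.ext (by simp only [Fin.val_mk]; try omega),
                 Fin.ext (by simp only [Fin.val_mk]; try omega)⟩⟩
      · exact ⟨⟨n - 1, by omega⟩, by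
          simp only [edgeMap, Fin.val_mk]
          rw [dif_neg (by omega), if_neg (by omega), if_pos trivial]
          rw [Sym2.eq_iff]; left
          exact ⟨Fin.ext (by simp only [Fin.val_mk]; try omega),
                 Fin.ext (by simp only [Fin.val_mk]; try omega)⟩⟩
      · exact ⟨⟨n, by omega⟩, by
          simp only [edgeMap, Fin.val_mk]
          rw [dif_neg (by omega), if_neg (by omega), if_neg (by omega), if_pos trivial]
          rw [Sym2.eq_iff]; left
          exact ⟨Fin.ext (by simp only [Fin.val_mk]; try omega),
                 Fin.ext (by simp only [Fin.val_mk]; try omega)⟩⟩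
      · exact ⟨⟨n + 1, by omega⟩, by
          simp only [edgeMap, Fin.val_mk]
          rw [dif_neg (by omega), if_neg (by omega), if_neg (by omega), if_neg (by omega)]
          rw [Sym2.eq_iff]; left
          exact ⟨Fin.ext (by simp only [Fin.val_mk]; try omega),
                 Fin.ext (by simp only [Fin.val_mk]; try omega)⟩⟩
      · exact ⟨⟨(v : ℕ), by omega⟩, by
          simp only [edgeMap, Fin.val_mk]
          rw [dif_pos (by omega)]
          rw [Sym2.eq_iff]; right
          exact ⟨Fin.ext (by simp only [Fin.val_mk]; try omega),
                 Fin.ext (by simp only [Fin.val_mk]; try omega)⟩⟩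
      · exact ⟨⟨n - 2, by omega⟩, by
          simp only [edgeMap, Fin.val_mk]
          rw [dif_neg (by omega), if_pos trivial]
          rw [Sym2.eq_iff]; right
          exact ⟨Fin.ext (by simp only [Fin.val_mk]; try omega),
                 Fin.ext (by simp only [Fin.val_mk]; try omega)⟩⟩
      · exact ⟨⟨n - 1, by omega⟩, by
          simp only [edgeMap, Fin.val_mk]
          rw [dif_neg (by omega), if_neg (by omega), if_pos trivial]
          rw [Sym2.eq_iff]; right
          exact ⟨Fin.ext (by simp only [Fin.val_mk]; try omega),
                 Fin.ext (by simp only [Fin.val_mk]; try omega)⟩⟩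
      · exact ⟨⟨n, by omega⟩, by
          simp only [edgeMap, Fin.val_mk]
          rw [dif_neg (by omega), if_neg (by omega), if_neg (by omega), if_pos trivial]
          rw [Sym2.eq_iff]; right
          exact ⟨Fin.ext (by simp only [Fin.val_mk]; try omega),
                 Fin.ext (by simp only [Fin.val_mk]; try omega)⟩⟩
      · exact ⟨⟨n + 1, by omega⟩, by
          simp only [edgeMap, Fin.val_mk]
          rw [dif_neg (by omega), if_neg (by omega), if_neg (by omega), if_neg (by omega)]
          rw [Sym2.eq_iff]; right
          exact ⟨Fin.ext (by simp only [Fin.val_mk]; try omega),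
                 Fin.ext (by simp only [Fin.val_mk]; try omega)⟩⟩
    · rintro ⟨k, hk⟩
      rw [← hk]
      have hk := k.isLt
      unfold edgeMap
      split_ifs with h1 h2 h3 h4
      · exact (SimpleGraph.mem_edgeSet _).mpr
          (hgraph_adj_mk hn (by omega) (by omega)
            (by simp only [Fin.val_mk, true_and, and_true, true_or, or_true] <;> first | trivial | omega))
      · exact (SimpleGraph.mem_edgeSet _).mpr
          (hgraph_adj_mk hn (by omega) (by omega)
            (by simp only [Fin.val_mk, true_and, and_true, true_or, or_true] <;> first | trivial | omega))
      · exact (SimpleGraph.mem_edgeSet _).mpr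
          (hgraph_adj_mk hn (by omega) (by omega)
            (by simp only [Fin.val_mk, true_and, and_true, true_or, or_true] <;> first | trivial | omega))
      · exact (SimpleGraph.mem_edgeSet _).mpr
          (hgraph_adj_mk hn (by omega) (by omega)
            (by simp only [Fin.val_mk, true_and, and_true, true_or, or_true] <;> first | trivial | omega))
      · exact (SimpleGraph.mem_edgeSet _).mpr
          (hgraph_adj_mk hn (by omega) (by omega)
            (by simp only [Fin.val_mk, true_and, and_true, true_or, or_true] <;> first | trivial | omega))

lemma hgraph_ncard {n : ℕ} (hn : 5 ≤ n) : (Hgraph n).edgeSet.ncard = n + 2 := by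
  rw [edgeset_eq hn, ← Nat.card_coe_set_eq, Nat.card_range_of_injective (edgeMap_inj hn)]
  simp

/-! ### connectivity -/

lemma chain_reach {n : ℕ} (H : SimpleGraph (Fin n)) :
    ∀ (d a b : ℕ) (hd : a + d = b) (hb : b < n)
      (hstep : ∀ k (h1 : a ≤ k) (h2 : k < b), H.Adj ⟨k, by omega⟩ ⟨k + 1, by omega⟩),
      H.Reachable ⟨a, by omega⟩ ⟨b, by omega⟩ := by
  intro d
  induction d with
  | zero =>
    intro a b hd hb _
    obtain rfl : a = b := by omega
    exact Reachable.refl _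
  | succ m ih =>
    intro a b hd hb hstep
    exact ((hstep a le_rfl (by omega)).reachable).trans
      (ih (a + 1) b (by omega) hb (fun k h1 h2 => hstep k (by omega) h2))

lemma hgraph_connected {n : ℕ} (hn : 5 ≤ n) : (Hgraph n).Connected := by
  rw [connected_iff]
  refine ⟨?_, ⟨⟨0, by omega⟩⟩⟩
  have reach : ∀ w : Fin n, (Hgraph n).Reachable ⟨0, by omega⟩ w := by
    intro w
    by_cases hw : (w : ℕ) ≤ n - 2
    · have h := chain_reach (Hgraph n) (w : ℕ) 0 (w : ℕ) (by omega) (by omega)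
        (fun k h1 h2 => hgraph_adj_mk hn (by omega) (by omega) (by omega))
      rwa [show (⟨(w : ℕ), by omega⟩ : Fin n) = w from Fin.ext rfl] at h
    · have h1 := chain_reach (Hgraph n) 1 0 1 (by omega) (by omega)
        (fun k hk1 hk2 => hgraph_adj_mk hn (by omega) (by omega) (by omega))
      have h2 : (Hgraph n).Adj ⟨n - 1, by omega⟩ ⟨1, by omega⟩ :=
        hgraph_adj_mk hn (by omega) (by omega) (by omega)
      have h := h1.trans h2.symm.reachable
      rwa [show (⟨n - 1, by omega⟩ : Fin n) = w from Fin.ext (by simp only [Fin.val_mk]; omega)] at h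
  exact fun u v => (reach u).symm.trans (reach v)

/-! ### no bridge -/

lemma hgraph_no_bridge {n : ℕ} (hn : 5 ≤ n) : ∀ e, ¬ (Hgraph n).IsBridge e := by
  intro e
  induction e using Sym2.ind with
  | _ u v =>
    rw [isBridge_iff]
    intro hnr
    by_cases hadj : (Hgraph n).Adj u v
    swap
    · have hdel : (Hgraph n).deleteEdges {s(u, v)} = Hgraph n := by
        rw [deleteEdges_eq_self, Set.disjoint_singleton_right, SimpleGraph.mem_edgeSet]
        exact hadj
      rw [hdel] at hnr
      exact hnr ((hgraph_connected hn).preconnected u v)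
    apply hnr
    set G' := Hgraph n \ fromEdgeSet {s(u, v)} with hG'
    have hadj' : ∀ (a b : ℕ) (ha : a < n) (hb : b < n),
        ((a + 1 = b ∧ b ≤ n - 2) ∨ (a = 0 ∧ b = n - 2) ∨
          (a = n - 1 ∧ (b = 1 ∨ b = 2 ∨ b = 3))) →
        ¬((a = (u : ℕ) ∧ b = (v : ℕ)) ∨ (a = (v : ℕ) ∧ b = (u : ℕ))) →
        G'.Adj ⟨a, ha⟩ ⟨b, hb⟩ := by
      intro a b ha hb hcl hne
      rw [hG', sdiff_adj]
      refine ⟨hgraph_adj_mk hn ha hb hcl, ?_⟩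
      rw [fromEdgeSet_adj]
      rintro ⟨hmem, -⟩
      rw [Set.mem_singleton_iff, Sym2.eq_iff] at hmem
      apply hne
      rcases hmem with ⟨h1, h2⟩ | ⟨h1, h2⟩
      · exact Or.inl ⟨congrArg Fin.val h1, congrArg Fin.val h2⟩
      · exact Or.inr ⟨congrArg Fin.val h1, congrArg Fin.val h2⟩
    -- helper : reach from a to b (a ≤ b ≤ n-2) avoiding e, provided no cycle edge in [a,b) is e
    have hchainG : ∀ (a b : ℕ) (hab : a ≤ b) (hb2 : b ≤ n - 2)
        (hav : ∀ k, a ≤ k → k < b →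
          ¬((k = (u : ℕ) ∧ k + 1 = (v : ℕ)) ∨ (k = (v : ℕ) ∧ k + 1 = (u : ℕ)))),
        G'.Reachable ⟨a, by omega⟩ ⟨b, by omega⟩ := by
      intro a b hab hb2 hav
      exact chain_reach G' (b - a) a b (by omega) (by omega)
        (fun k h1 h2 => hadj' k (k + 1) (by omega) (by omega) (by omega) (hav k h1 h2))
    rw [hgraph_adj hn] at hadj
    have hu := u.isLt
    have hv := v.isLt
    have main : ∀ (x y : Fin n), ((x : ℕ) + 1 = (y : ℕ) ∧ (y : ℕ) ≤ n - 2) ∨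
        ((x : ℕ) = 0 ∧ (y : ℕ) = n - 2) ∨
        ((x : ℕ) = n - 1 ∧ ((y : ℕ) = 1 ∨ (y : ℕ) = 2 ∨ (y : ℕ) = 3)) →
        ((x = u ∧ y = v) ∨ (x = v ∧ y = u)) → G'.Reachable x y := by
      intro x y hcl hxy
      have hxu : ((x : ℕ) = (u : ℕ) ∧ (y : ℕ) = (v : ℕ)) ∨
          ((x : ℕ) = (v : ℕ) ∧ (y : ℕ) = (u : ℕ)) := by
        rcases hxy with ⟨rfl, rfl⟩ | ⟨rfl, rfl⟩
        · exact Or.inl ⟨rfl, rfl⟩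
        · exact Or.inr ⟨rfl, rfl⟩
      have hx := x.isLt
      have hy := y.isLt
      rcases hcl with ⟨h1, h2⟩ | ⟨h1, h2⟩ | ⟨h1, h2⟩
      · -- cycle edge (x, x+1) : go the long way round
        have rA : G'.Reachable ⟨(y : ℕ), by omega⟩ ⟨n - 2, by omega⟩ :=
          hchainG (y : ℕ) (n - 2) (by omega) (by omega) (fun k hk1 hk2 => by omega)
        have rB : G'.Adj ⟨n - 2, by omega⟩ ⟨0, by omega⟩ :=
          (hadj' 0 (n - 2) (by omega) (by omega) (by omega) (by omega)).symm
        have rC : G'.Reachable ⟨0, by omega⟩ ⟨(x : ℕ), by omega⟩ :=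
          hchainG 0 (x : ℕ) (by omega) (by omega) (fun k hk1 hk2 => by omega)
        have h := ((rA.trans rB.reachable).trans rC).symm
        rwa [show (⟨(x : ℕ), by omega⟩ : Fin n) = x from Fin.ext rfl,
             show (⟨(y : ℕ), by omega⟩ : Fin n) = y from Fin.ext rfl] at h
      · -- wrap edge (0, n-2) : go along the path
        have h := hchainG 0 (n - 2) (by omega) (by omega) (fun k hk1 hk2 => by omega)
        rwa [show (⟨0, by omega⟩ : Fin n) = x from Fin.ext (by simp only [Fin.val_mk]; omega),
             show (⟨n - 2, by omega⟩ : Fin n) = y from Fin.ext (by simp only [Fin.val_mk]; omega)] at h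
      · -- x = n-1 : edges to 1,2,3 ; two-step detours
        rcases h2 with h2 | h2 | h2
        · -- e = (x,1) : detour x → 2 → 1
          have s1 : G'.Adj ⟨n - 1, by omega⟩ ⟨2, by omega⟩ :=
            hadj' (n - 1) 2 (by omega) (by omega) (by omega) (by omega)
          have s2 : G'.Adj ⟨2, by omega⟩ ⟨1, by omega⟩ :=
            (hadj' 1 2 (by omega) (by omega) (by omega) (by omega)).symm
          have h := s1.reachable.trans s2.reachable
          rwa [show (⟨n - 1, by omega⟩ : Fin n) = x from Fin.ext (by simp only [Fin.val_mk]; omega),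
               show (⟨1, by omega⟩ : Fin n) = y from Fin.ext (by simp only [Fin.val_mk]; omega)] at h
        · -- e = (x,2) : detour x → 3 → 2
          have s1 : G'.Adj ⟨n - 1, by omega⟩ ⟨3, by omega⟩ :=
            hadj' (n - 1) 3 (by omega) (by omega) (by omega) (by omega)
          have s2 : G'.Adj ⟨3, by omega⟩ ⟨2, by omega⟩ :=
            (hadj' 2 3 (by omega) (by omega) (by omega) (by omega)).symm
          have h := s1.reachable.trans s2.reachable
          rwa [show (⟨n - 1, by omega⟩ : Fin n) = x from Fin.ext (by simp only [Fin.val_mk]; omega),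
               show (⟨2, by omega⟩ : Fin n) = y from Fin.ext (by simp only [Fin.val_mk]; omega)] at h
        · -- e = (x,3) : detour x → 2 → 3
          have s1 : G'.Adj ⟨n - 1, by omega⟩ ⟨2, by omega⟩ :=
            hadj' (n - 1) 2 (by omega) (by omega) (by omega) (by omega)
          have s2 : G'.Adj ⟨2, by omega⟩ ⟨3, by omega⟩ :=
            hadj' 2 3 (by omega) (by omega) (by omega) (by omega)
          have h := s1.reachable.trans s2.reachable
          rwa [show (⟨n - 1, by omega⟩ : Fin n) = x from Fin.ext (by simp only [Fin.val_mk]; omega),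
               show (⟨3, by omega⟩ : Fin n) = y from Fin.ext (by simp only [Fin.val_mk]; omega)] at h
    rcases hadj with h | h
    · exact main u v h (Or.inl ⟨rfl, rfl⟩)
    · exact (main v u h (Or.inr ⟨rfl, rfl⟩)).symm

theorem stmt_7 (n : ℕ) (hn : 5 ≤ n) :
    ∃ G : SimpleGraph (Fin n), Bridgeless G ∧ G.edgeSet.ncard = n + 2 ∧
      ¬ ∃ R : Fin n → Fin n → Prop, IsOrientation G R ∧ DiamLE R (n - 2) := by
  exact ⟨Hgraph n, ⟨hgraph_connected hn, hgraph_no_bridge hn⟩, hgraph_ncard hn,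
    no_orientation hn⟩
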